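/- arXiv:2005.06152 — 6 statements merged into one kernel-verified Lean document; each statement's English description precedes it below -/
import Mathlib

section
/- Let G be a simple graph, u a vertex of G, and t a vertex of degree 2 adjacent to u whose other neighbor is x, where x ≠ u and ux ∉ E(G). Let G′ be the graph obtained from G by deleting t and adding the edge ux (so E(G′) = (E(G) ∖ {ut, tx}) ∪ {ux}). If G′ admits an acyclic edge k-coloring and k ≥ d_G(u) + 1, then G admits an acyclic edge k-coloring. (In particular, taking k = Δ(G)+2 always satisfies k ≥ d_G(u)+1.) -/
variable {V : Type*}

/-- A proper edge `k`-coloring: every edge receives a color in `{1, …, k}`, and any two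
distinct edges sharing an endpoint receive different colors. -/
def ProperEdgeColoring (G : SimpleGraph V) (k : ℕ) (c : Sym2 V → ℕ) : Prop :=
  (∀ e ∈ G.edgeSet, c e ∈ Finset.Icc 1 k) ∧
    ∀ e₁ ∈ G.edgeSet, ∀ e₂ ∈ G.edgeSet, e₁ ≠ e₂ → (∃ x, x ∈ e₁ ∧ x ∈ e₂) → c e₁ ≠ c e₂

/-- No cycle of `G` has all of its edges colored with only two colors. -/
def NoBichromaticCycle (G : SimpleGraph V) (c : Sym2 V → ℕ) : Prop :=
  ∀ (v : V) (w : G.Walk v v), w.IsCycle → ¬ ∃ a b : ℕ, ∀ e ∈ w.edges, c e = a ∨ c e = b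

/-- An acyclic edge `k`-coloring is a proper edge `k`-coloring with no bichromatic cycle. -/
def AcyclicEdgeColoring (G : SimpleGraph V) (k : ℕ) (c : Sym2 V → ℕ) : Prop :=
  ProperEdgeColoring G k c ∧ NoBichromaticCycle G c

open SimpleGraph Walk in
private lemma exists_two_edges_base {G : SimpleGraph V} {p : V} (w : G.Walk p p)
    (hw : w.IsCycle) : ∃ y z : V, y ≠ z ∧ s(p, y) ∈ w.edges ∧ s(p, z) ∈ w.edges := by
  cases w with
  | nil => exact absurd hw SimpleGraph.Walk.IsCycle.not_of_nil
  | @cons _ y _ h q =>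
    obtain ⟨z, q', h', heq⟩ := SimpleGraph.Walk.exists_cons_eq_concat h q
    refine ⟨y, z, ?_, ?_, ?_⟩
    · rintro rfl
      have hnodup : (Walk.cons h q).edges.Nodup := hw.1.1.edges_nodup
      have he1 : (Walk.cons h q).edges = s(p, y) :: q.edges := Walk.edges_cons h q
      have he2 : (Walk.cons h q).edges = q'.edges ++ [s(y, p)] := by
        rw [heq, Walk.edges_concat, List.concat_eq_append]
      have hlen : 3 ≤ (Walk.cons h q).length := hw.three_le_length
      cases hq' : q'.edges with
      | nil =>
        rw [hq'] at he2
        have := congrArg List.length he2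
        rw [Walk.length_edges] at this
        simp only [List.nil_append, List.length_cons, List.length_nil,
          Walk.length_cons] at this hlen
        omega
      | cons a l =>
        rw [hq', he1] at he2
        have htail : q.edges = l ++ [s(y, p)] := by
          simpa using congrArg List.tail he2
        have hmem : s(y, p) ∈ q.edges := by
          rw [htail]; simp
        rw [he1, List.nodup_cons] at hnodup
        exact hnodup.1 (by rwa [Sym2.eq_swap])
    · rw [Walk.edges_cons]; exact List.mem_cons_self
    · rw [heq, Walk.edges_concat, List.concat_eq_append]
      simp [Sym2.eq_swap]

open SimpleGraph Walk in
private lemma exists_two_edges {G : SimpleGraph V} [DecidableEq V] {v p : V} (w : G.Walk v v)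
    (hw : w.IsCycle) (hp : p ∈ w.support) :
    ∃ y z : V, y ≠ z ∧ s(p, y) ∈ w.edges ∧ s(p, z) ∈ w.edges := by
  obtain ⟨y, z, hyz, h1, h2⟩ := exists_two_edges_base (w.rotate p hp) (hw.rotate hp)
  have hperm := w.rotate_edges p hp
  exact ⟨y, z, hyz, hperm.mem_iff.mp h1, hperm.mem_iff.mp h2⟩


/-- Suppression of a degree-`2` vertex `t` adjacent to `u` (other neighbor `x`, with
`x ≠ u` and `ux ∉ E(G)`): if the graph `G'` with
`E(G') = (E(G) \ {ut, tx}) ∪ {ux}` admits an acyclic edge `k`-coloring and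
`k ≥ d_G(u) + 1`, then `G` admits an acyclic edge `k`-coloring. -/
theorem stmt_2 [Fintype V] [DecidableEq V] (G : SimpleGraph V) [DecidableRel G.Adj]
    (u t x : V) (hut : G.Adj u t) (htx : G.Adj t x) (hxu : x ≠ u)
    (hdeg : G.degree t = 2) (hux : ¬ G.Adj u x) (k : ℕ)
    (hk : G.degree u + 1 ≤ k)
    (h : ∃ c : Sym2 V → ℕ,
      AcyclicEdgeColoring
        (SimpleGraph.fromEdgeSet ((G.edgeSet \ {s(u, t), s(t, x)}) ∪ {s(u, x)})) k c) :
    ∃ c : Sym2 V → ℕ, AcyclicEdgeColoring G k c := by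
  classical
  obtain ⟨c, ⟨⟨hc1, hc2⟩, hc3⟩⟩ := h
  set G' := SimpleGraph.fromEdgeSet ((G.edgeSet \ {s(u, t), s(t, x)}) ∪ {s(u, x)}) with hG'
  have hut' : u ≠ t := hut.ne
  have htx' : t ≠ x := htx.ne
  have hux' : u ≠ x := fun hh => hxu hh.symm
  -- edge set of G'
  have hE : G'.edgeSet = (G.edgeSet \ {s(u, t), s(t, x)}) ∪ {s(u, x)} := by
    rw [hG', SimpleGraph.edgeSet_fromEdgeSet]
    ext e
    simp only [Set.mem_diff, Set.mem_union, Set.mem_setOf_eq, Set.mem_insert_iff,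
      Set.mem_singleton_iff]
    constructor
    · exact fun he => he.1
    · rintro (⟨he, hne⟩ | rfl)
      · exact ⟨Or.inl ⟨he, hne⟩, G.not_isDiag_of_mem_edgeSet he⟩
      · exact ⟨Or.inr rfl, by simp [Sym2.isDiag_iff_proj_eq, hux']⟩
  -- neighbors of t in G
  have hNt : G.neighborFinset t = {u, x} := by
    symm
    apply Finset.eq_of_subset_of_card_le
    · intro y hy
      simp only [Finset.mem_insert, Finset.mem_singleton] at hy
      rcases hy with rfl | rfl
      · exact (SimpleGraph.mem_neighborFinset _ _ _).mpr hut.symm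
      · exact (SimpleGraph.mem_neighborFinset _ _ _).mpr htx
    · rw [SimpleGraph.card_neighborFinset_eq_degree, hdeg]
      rw [Finset.card_insert_of_notMem (by simpa using hux')]
      simp
  have hadjt : ∀ y, G.Adj t y → y = u ∨ y = x := by
    intro y hy
    have : y ∈ G.neighborFinset t := (SimpleGraph.mem_neighborFinset _ _ _).mpr hy
    rw [hNt] at this
    simpa using this
  -- normal edges lie in G'
  have hmem : ∀ e ∈ G.edgeSet, e ≠ s(u, t) → e ≠ s(t, x) → e ∈ G'.edgeSet := by
    intro e he h1 h2
    rw [hE]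
    exact Or.inl ⟨he, by simp [h1, h2]⟩
  have huxE : s(u, x) ∉ G.edgeSet := fun hh => hux ((SimpleGraph.mem_edgeSet G).mp hh)
  have huxG' : s(u, x) ∈ G'.edgeSet := by rw [hE]; exact Or.inr rfl
  -- adjacency of u in G'
  have hadj' : ∀ y, G'.Adj u y ↔ (G.Adj u y ∧ y ≠ t) ∨ y = x := by
    intro y
    rw [← SimpleGraph.mem_edgeSet, hE]
    constructor
    · rintro (⟨he, hne⟩ | hx)
      · refine Or.inl ⟨(SimpleGraph.mem_edgeSet G).mp he, ?_⟩
        rintro rfl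
        exact hne (Set.mem_insert _ _)
      · rw [Set.mem_singleton_iff, Sym2.eq_iff] at hx
        rcases hx with ⟨_, rfl⟩ | ⟨h1, _⟩
        · exact Or.inr rfl
        · exact absurd h1 hux'
    · rintro (⟨he, hne⟩ | rfl)
      · refine Or.inl ⟨(SimpleGraph.mem_edgeSet G).mpr he, ?_⟩
        rintro (h1 | h2)
        · rw [Sym2.eq_iff] at h1
          rcases h1 with ⟨_, h1⟩ | ⟨h1, _⟩
          · exact hne h1
          · exact hut' h1
        · rw [Set.mem_singleton_iff, Sym2.eq_iff] at h2
          rcases h2 with ⟨h2, _⟩ | ⟨h2, _⟩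
          · exact hut' h2
          · exact hux' h2
      · exact Or.inr rfl
  -- the color set at u in G'
  set N : Finset V := Finset.univ.filter (fun y => G'.Adj u y) with hN
  set S : Finset ℕ := N.image (fun y => c s(u, y)) with hS
  have hNcard : N.card = G.degree u := by
    have : N = insert x ((G.neighborFinset u).erase t) := by
      ext y
      simp only [hN, Finset.mem_filter, Finset.mem_univ, true_and, Finset.mem_insert,
        Finset.mem_erase, SimpleGraph.mem_neighborFinset, hadj' y]
      tauto
    rw [this, Finset.card_insert_of_notMem (by simp [SimpleGraph.mem_neighborFinset, hux])]
    rw [Finset.card_erase_of_mem ((SimpleGraph.mem_neighborFinset _ _ _).mpr hut)]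
    have : 1 ≤ G.degree u := by
      rw [← SimpleGraph.card_neighborFinset_eq_degree]
      exact Finset.card_pos.mpr ⟨t, (SimpleGraph.mem_neighborFinset _ _ _).mpr hut⟩
    rw [SimpleGraph.card_neighborFinset_eq_degree]
    omega
  have hSfree : (Finset.Icc 1 k \ S).Nonempty := by
    rw [Finset.sdiff_nonempty]
    intro hsub
    have h1 := Finset.card_le_card hsub
    have h2 : S.card ≤ N.card := Finset.card_image_le
    rw [Nat.card_Icc] at h1
    omega
  obtain ⟨α, hα⟩ := hSfree
  rw [Finset.mem_sdiff] at hα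
  obtain ⟨hαIcc, hαS⟩ := hα
  -- colors of G'-edges at u are in S
  have hmemS : ∀ e ∈ G'.edgeSet, u ∈ e → c e ∈ S := by
    intro e he hu
    induction e with
    | _ a b =>
      rw [Sym2.mem_iff] at hu
      have : ∃ y, s(a, b) = s(u, y) := by
        rcases hu with rfl | rfl
        · exact ⟨b, rfl⟩
        · exact ⟨a, Sym2.eq_swap⟩
      obtain ⟨y, hy⟩ := this
      rw [hy] at he ⊢
      rw [hS]
      exact Finset.mem_image_of_mem _ (by simp [hN, (SimpleGraph.mem_edgeSet G').mp he])
  have hαux : α ≠ c s(u, x) := fun hh => hαS (hh ▸ hmemS _ huxG' (by simp))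
  -- the new coloring
  set c' : Sym2 V → ℕ := fun e => if e = s(u, t) then α else if e = s(t, x) then c s(u, x) else c e
    with hc'
  have hc'ut : c' s(u, t) = α := by simp [hc']
  have htxut : s(t, x) ≠ s(u, t) := by
    rw [ne_eq, Sym2.eq_iff]
    rintro (⟨h1, h2⟩ | ⟨h1, h2⟩)
    · exact hut' h1.symm
    · exact hxu h2
  have hc'tx : c' s(t, x) = c s(u, x) := by simp [hc', htxut]
  have hc'norm : ∀ e, e ≠ s(u, t) → e ≠ s(t, x) → c' e = c e := by
    intro e h1 h2; simp [hc', h1, h2]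
  -- e normal with t ∈ e impossible
  have hnet : ∀ e ∈ G.edgeSet, e ≠ s(u, t) → e ≠ s(t, x) → t ∉ e := by
    intro e he h1 h2 hte
    induction e with
    | _ a b =>
      rw [Sym2.mem_iff] at hte
      have : ∃ y, s(a, b) = s(t, y) ∧ G.Adj t y := by
        rcases hte with rfl | rfl
        · exact ⟨b, rfl, (SimpleGraph.mem_edgeSet G).mp he⟩
        · exact ⟨a, Sym2.eq_swap, ((SimpleGraph.mem_edgeSet G).mp he).symm⟩
      obtain ⟨y, hy, hyadj⟩ := this
      rcases hadjt y hyadj with rfl | rfl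
      · exact h1 (by rw [hy, Sym2.eq_swap])
      · exact h2 (by rw [hy])
  -- key properties of normal edges
  have hshape : ∀ e ∈ G.edgeSet, e ≠ s(u, t) → e ≠ s(t, x) →
      (u ∈ e → c e ∈ S) ∧ (x ∈ e → c e ≠ c s(u, x)) := by
    intro e he h1 h2
    have heG' : e ∈ G'.edgeSet := hmem e he h1 h2
    have heux : e ≠ s(u, x) := fun hh => huxE (hh ▸ he)
    constructor
    · exact hmemS e heG'
    · intro hxe
      exact hc2 e heG' (s(u, x)) huxG' heux ⟨x, hxe, by simp⟩
  refine ⟨c', ⟨⟨?_, ?_⟩, ?_⟩⟩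
  · -- colors in range
    intro e he
    by_cases h1 : e = s(u, t)
    · rw [h1, hc'ut]; exact hαIcc
    by_cases h2 : e = s(t, x)
    · rw [h2, hc'tx]; exact hc1 _ huxG'
    · rw [hc'norm e h1 h2]; exact hc1 _ (hmem e he h1 h2)
  · -- proper
    have main : ∀ e₁ ∈ G.edgeSet, ∀ e₂ ∈ G.edgeSet, e₁ ≠ e₂ →
        (∃ y, y ∈ e₁ ∧ y ∈ e₂) →
        (e₁ = s(u, t) ∨ (e₁ = s(t, x) ∧ e₂ ≠ s(u, t))) → c' e₁ ≠ c' e₂ := by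
      rintro e₁ he₁ e₂ he₂ hne ⟨y0, hy1, hy2⟩ (rfl | ⟨rfl, h2ut⟩)
      · rw [hc'ut]
        by_cases h2 : e₂ = s(t, x)
        · rw [h2, hc'tx]; exact hαux
        · have h2ut : e₂ ≠ s(u, t) := fun hh => hne hh.symm
          rw [hc'norm e₂ h2ut h2]
          have hy1' : y0 = u ∨ y0 = t := by simpa using hy1
          have hu2 : u ∈ e₂ := by
            rcases hy1' with rfl | rfl
            · exact hy2
            · exact absurd hy2 (hnet e₂ he₂ h2ut h2)
          exact fun hh => hαS (hh ▸ (hshape e₂ he₂ h2ut h2).1 hu2)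
      · rw [hc'tx]
        have h2tx : e₂ ≠ s(t, x) := fun hh => hne hh.symm
        rw [hc'norm e₂ h2ut h2tx]
        have hy1' : y0 = t ∨ y0 = x := by simpa using hy1
        have hx2 : x ∈ e₂ := by
          rcases hy1' with rfl | rfl
          · exact absurd hy2 (hnet e₂ he₂ h2ut h2tx)
          · exact hy2
        exact fun hh => (hshape e₂ he₂ h2ut h2tx).2 hx2 hh.symm
    intro e₁ he₁ e₂ he₂ hne hshare
    by_cases h1 : e₁ = s(u, t)
    · exact main e₁ he₁ e₂ he₂ hne hshare (Or.inl h1)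
    by_cases h2 : e₂ = s(u, t)
    · exact (main e₂ he₂ e₁ he₁ hne.symm
        (hshare.imp fun y0 hy => ⟨hy.2, hy.1⟩) (Or.inl h2)).symm
    by_cases h3 : e₁ = s(t, x)
    · exact main e₁ he₁ e₂ he₂ hne hshare (Or.inr ⟨h3, h2⟩)
    by_cases h4 : e₂ = s(t, x)
    · exact (main e₂ he₂ e₁ he₁ hne.symm
        (hshare.imp fun y0 hy => ⟨hy.2, hy.1⟩) (Or.inr ⟨h4, h1⟩)).symm
    · rw [hc'norm e₁ h1 h3, hc'norm e₂ h2 h4]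
      exact hc2 e₁ (hmem e₁ he₁ h1 h3) e₂ (hmem e₂ he₂ h2 h4) hne hshare
  · -- acyclic
    rintro v w hw ⟨a, b, hab⟩
    by_cases hT : t ∈ w.support
    · -- cycle through t
      obtain ⟨y, z, hyz, hey, hez⟩ := exists_two_edges w hw hT
      have hyadj := w.adj_of_mem_edges hey
      have hzadj := w.adj_of_mem_edges hez
      have hy' := hadjt y hyadj
      have hz' := hadjt z hzadj
      have hboth : s(u, t) ∈ w.edges ∧ s(t, x) ∈ w.edges := by
        rcases hy' with rfl | rfl <;> rcases hz' with rfl | rfl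
        · exact absurd rfl hyz
        · exact ⟨by rwa [Sym2.eq_swap] at hey, hez⟩
        · exact ⟨by rwa [Sym2.eq_swap] at hez, hey⟩
        · exact absurd rfl hyz
      obtain ⟨hutm, htxm⟩ := hboth
      have hu_supp : u ∈ w.support := w.fst_mem_support_of_mem_edges hutm
      obtain ⟨y', z', hyz', hey', hez'⟩ := exists_two_edges w hw hu_supp
      have hthird : ∃ r, r ≠ t ∧ s(u, r) ∈ w.edges := by
        by_cases hyt : y' = t
        · exact ⟨z', fun hh => hyz' (hyt.trans hh.symm), hez'⟩
        · exact ⟨y', hyt, hey'⟩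
      obtain ⟨r, hrt, herm⟩ := hthird
      have hradj : G.Adj u r := w.adj_of_mem_edges herm
      have herut : s(u, r) ≠ s(u, t) := by
        rw [ne_eq, Sym2.eq_iff]
        rintro (⟨h1, h2⟩ | ⟨h1, h2⟩)
        · exact hrt h2
        · exact hut' h1
      have hertx : s(u, r) ≠ s(t, x) := by
        rw [ne_eq, Sym2.eq_iff]
        rintro (⟨h1, h2⟩ | ⟨h1, h2⟩)
        · exact hut' h1
        · exact hux' h1
      have herS : c s(u, r) ∈ S :=
        (hshape _ ((SimpleGraph.mem_edgeSet G).mpr hradj) herut hertx).1 (by simp)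
      have her1 : c s(u, r) ≠ α := fun hh => hαS (hh ▸ herS)
      have her2 : c s(u, r) ≠ c s(u, x) := by
        refine hc2 _ (hmem _ ((SimpleGraph.mem_edgeSet G).mpr hradj) herut hertx) _ huxG'
          (fun hh => huxE (hh ▸ (SimpleGraph.mem_edgeSet G).mpr hradj)) ⟨u, by simp, by simp⟩
      have h1 := hab _ hutm
      have h2 := hab _ htxm
      have h3 := hab _ herm
      rw [hc'ut] at h1
      rw [hc'tx] at h2
      rw [hc'norm _ herut hertx] at h3
      rcases h1 with h1 | h1 <;> rcases h2 with h2 | h2 <;> rcases h3 with h3 | h3 <;>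
        first
          | exact hαux (h1.trans h2.symm)
          | exact her1 (h3.trans h1.symm)
          | exact her2 (h3.trans h2.symm)
    · -- cycle avoiding t : transfer to G'
      have hedges : ∀ e ∈ w.edges, e ∈ G'.edgeSet := by
        intro e he
        have heG := w.edges_subset_edgeSet he
        have h1 : e ≠ s(u, t) := by
          rintro rfl
          exact hT (w.snd_mem_support_of_mem_edges he)
        have h2 : e ≠ s(t, x) := by
          rintro rfl
          exact hT (w.fst_mem_support_of_mem_edges he)
        exact hmem e heG h1 h2
      refine hc3 v (w.transfer G' hedges) (hw.transfer hedges) ⟨a, b, ?_⟩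
      intro e he
      rw [w.edges_transfer hedges] at he
      have heG := w.edges_subset_edgeSet he
      have h1 : e ≠ s(u, t) := by
        rintro rfl
        exact hT (w.snd_mem_support_of_mem_edges he)
      have h2 : e ≠ s(t, x) := by
        rintro rfl
        exact hT (w.fst_mem_support_of_mem_edges he)
      rw [← hc'norm e h1 h2]
      exact hab e he
end

section
/- Let G be a simple 2-connected graph (so every vertex has degree at least 2) satisfying: (i) no vertex of degree 2 in G is adjacent to a vertex of degree at most 5; (ii) every vertex u of degree at least 6 that is adjacent to some 2-vertex satisfies n_2(u) + n_3(u) ≤ d(u) − 3; (iii) no vertex u of degree at least 6 adjacent to some 2-vertex satisfies both n_2(u) + n_3(u) = d(u) − 3 and n_3(u) ≤ 3. Then every vertex of H has degree at least 3 in H; more specifically, for every vertex u of H: if 3 ≤ d(u) ≤ 5 then d_H(u) = d(u), and if d(u) ≥ 6 then d_H(u) ≥ 4. -/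
variable {V : Type*} [Fintype V] [DecidableEq V]

/-- `G` is 2-connected: it is connected, has at least 3 vertices, and deleting any
single vertex leaves it connected. -/
def TwoConnected (G : SimpleGraph V) : Prop :=
  G.Connected ∧ 3 ≤ Fintype.card V ∧
    ∀ v : V, (G.induce {w : V | w ≠ v}).Connected

/-- `nk G u m` is the number of neighbors of `u` in `G` having degree exactly `m`. -/
def nk (G : SimpleGraph V) [DecidableRel G.Adj] (u : V) (m : ℕ) : ℕ :=
  ((G.neighborFinset u).filter fun w => G.degree w = m).card

/-- `delTwo G` is the graph `H` obtained from `G` by deleting all 2-vertices: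
it keeps exactly the edges of `G` joining two vertices of degree at least 3
(deleted vertices become isolated). -/
def delTwo (G : SimpleGraph V) [DecidableRel G.Adj] : SimpleGraph V where
  Adj x y := G.Adj x y ∧ 3 ≤ G.degree x ∧ 3 ≤ G.degree y
  symm := ⟨fun x y h => ⟨h.1.symm, h.2.2, h.2.1⟩⟩
  loopless := ⟨fun x h => G.loopless.irrefl x h.1⟩

instance (G : SimpleGraph V) [DecidableRel G.Adj] : DecidableRel (delTwo G).Adj :=
  fun x y => inferInstanceAs (Decidable (G.Adj x y ∧ 3 ≤ G.degree x ∧ 3 ≤ G.degree y))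

/-- In a 2-connected graph, every vertex has degree at least 2. -/
lemma minDeg_two (G : SimpleGraph V) [DecidableRel G.Adj] (h2c : TwoConnected G) :
    ∀ v : V, 2 ≤ G.degree v := by
  obtain ⟨hconn, hcard, hdel⟩ := h2c
  intro v
  by_contra hlt
  push_neg at hlt
  interval_cases hd : G.degree v
  · -- degree 0 : v has no neighbors, but G connected with ≥ 2 vertices
    obtain ⟨x, hx⟩ : ∃ x : V, x ≠ v := by
      by_contra h
      push_neg at h
      have : Fintype.card V ≤ 1 := Fintype.card_le_one_iff.2 fun a b => (h a).trans (h b).symm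
      omega
    obtain ⟨p⟩ := hconn.preconnected v x
    cases p with
    | nil => exact hx rfl
    | cons h q =>
      have : _ ∈ G.neighborFinset v := (SimpleGraph.mem_neighborFinset _ _ _).2 h
      rw [show G.neighborFinset v = ∅ from Finset.card_eq_zero.1 hd] at this
      exact absurd this (Finset.notMem_empty _)
  · -- degree 1 : v has a unique neighbor w; delete w
    obtain ⟨w, hw⟩ := Finset.card_eq_one.1 hd
    have hadj : G.Adj v w := by
      rw [← SimpleGraph.mem_neighborFinset, hw]; exact Finset.mem_singleton_self w
    have hvw : v ≠ w := G.ne_of_adj hadj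
    -- there is some x ≠ v, x ≠ w, since card V ≥ 3
    obtain ⟨x, hxv, hxw⟩ : ∃ x : V, x ≠ v ∧ x ≠ w := by
      by_contra h
      push_neg at h
      have : Fintype.card V ≤ Finset.card {v, w} := by
        apply Finset.card_le_card_of_injOn (fun a => a) _ (fun a _ b _ hab => hab)
        intro a _
        simp only [Finset.mem_coe, Finset.mem_insert, Finset.mem_singleton]
        by_cases h1 : a = v
        · exact Or.inl h1
        · exact Or.inr (h a h1)
      have : Finset.card ({v, w} : Finset V) ≤ 2 := Finset.card_insert_le _ _ |>.trans (by simp)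
      omega
    have hconn' := hdel w
    obtain ⟨p⟩ := hconn'.preconnected ⟨v, hvw⟩ ⟨x, hxw⟩
    have hne : (⟨v, hvw⟩ : {a : V | a ≠ w}) ≠ ⟨x, hxw⟩ := by
      intro h
      exact hxv (congrArg Subtype.val h).symm
    have hadj' := p.adj_snd (SimpleGraph.Walk.not_nil_of_ne hne)
    set b := p.getVert 1 with hb
    have hadj'' : G.Adj v (b : V) := hadj'
    have hbmem : (b : V) ∈ G.neighborFinset v := (SimpleGraph.mem_neighborFinset _ _ _).2 hadj''
    rw [hw, Finset.mem_singleton] at hbmem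
    exact b.2 hbmem

/-- In a 2-connected graph satisfying (i)–(iii), every vertex of `H` has `H`-degree at
least 3; more precisely, if `3 ≤ d(u) ≤ 5` then `d_H(u) = d(u)`, and if `d(u) ≥ 6` then
`d_H(u) ≥ 4`. -/
theorem stmt_4 (G : SimpleGraph V) [DecidableRel G.Adj]
    (h2c : TwoConnected G)
    (hi : ∀ v w : V, G.Adj v w → G.degree v = 2 → ¬ G.degree w ≤ 5)
    (hii : ∀ z : V, 6 ≤ G.degree z → (∃ t, G.Adj z t ∧ G.degree t = 2) →
      nk G z 2 + nk G z 3 ≤ G.degree z - 3)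
    (hiii : ∀ z : V, 6 ≤ G.degree z → (∃ t, G.Adj z t ∧ G.degree t = 2) →
      ¬ (nk G z 2 + nk G z 3 = G.degree z - 3 ∧ nk G z 3 ≤ 3)) :
    ∀ u : V, 3 ≤ G.degree u →
      3 ≤ (delTwo G).degree u ∧
      (G.degree u ≤ 5 → (delTwo G).degree u = G.degree u) ∧
      (6 ≤ G.degree u → 4 ≤ (delTwo G).degree u) := by
  have hmin := minDeg_two G h2c
  intro u hu
  -- neighbor finset of u in delTwo
  have hnbr : (delTwo G).neighborFinset u
      = (G.neighborFinset u).filter fun w => 3 ≤ G.degree w := by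
    ext w
    simp only [SimpleGraph.mem_neighborFinset, Finset.mem_filter]
    constructor
    · rintro ⟨h1, _, h3⟩; exact ⟨h1, h3⟩
    · rintro ⟨h1, h3⟩; exact ⟨h1, hu, h3⟩
  -- key: deg u = n2 u + deg_H u
  have hsum : G.degree u = nk G u 2 + (delTwo G).degree u := by
    have := Finset.card_filter_add_card_filter_not
      (s := G.neighborFinset u) (p := fun w => G.degree w = 2)
    rw [SimpleGraph.degree, SimpleGraph.degree, hnbr, nk]
    rw [← this]
    congr 1
    apply congrArg Finset.card
    apply Finset.filter_congr
    intro w hw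
    have h2 := hmin w
    constructor <;> intro h <;> omega
  have hn2 : G.degree u ≤ 5 → nk G u 2 = 0 := by
    intro h5
    rw [nk, Finset.card_eq_zero, Finset.filter_eq_empty_iff]
    intro w hw hdw
    exact hi w u (((SimpleGraph.mem_neighborFinset _ _ _).1 hw).symm) hdw h5
  refine ⟨?_, ?_, ?_⟩ <;> try intro hd
  · by_cases h5 : G.degree u ≤ 5
    · have := hn2 h5; omega
    · push_neg at h5
      by_cases he : ∃ t, G.Adj u t ∧ G.degree t = 2
      · have h2 := hii u h5 he
        have h3 := hiii u h5 he
        have hle : nk G u 3 ≤ 3 ∨ ¬ nk G u 3 ≤ 3 := em _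
        omega
      · have : nk G u 2 = 0 := by
          rw [nk, Finset.card_eq_zero, Finset.filter_eq_empty_iff]
          intro w hw hdw
          exact he ⟨w, (SimpleGraph.mem_neighborFinset _ _ _).1 hw, hdw⟩
        omega
  · have := hn2 hd; omega
  · by_cases he : ∃ t, G.Adj u t ∧ G.degree t = 2
    · have h2 := hii u hd he
      have h3 := hiii u hd he
      have hle : nk G u 3 ≤ 3 ∨ ¬ nk G u 3 ≤ 3 := em _
      omega
    · have : nk G u 2 = 0 := by
        rw [nk, Finset.card_eq_zero, Finset.filter_eq_empty_iff]
        intro w hw hdw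
        exact he ⟨w, (SimpleGraph.mem_neighborFinset _ _ _).1 hw, hdw⟩
      omega
end

section
/- Let G be a simple 2-connected graph satisfying: (i) no vertex of degree 2 in G is adjacent to a vertex of degree at most 5; (ii) every vertex u of degree at least 6 that is adjacent to some 2-vertex satisfies n_2(u) + n_3(u) ≤ d(u) − 3; (iii) no vertex u of degree at least 6 adjacent to some 2-vertex satisfies both n_2(u) + n_3(u) = d(u) − 3 and n_3(u) ≤ 3. Then for every vertex u of H: no neighbor of u in H has degree 2 in G; d_H(u) = 3 if and only if d(u) = 3; and the number of neighbors of u in H whose degree in H is 3 equals n_3(u), the number of neighbors of u in G whose degree in G is 3. -/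
variable {V : Type*} [Fintype V] [DecidableEq V]

lemma exists_adj_of_reachable' {W : Type*} {G : SimpleGraph W} {v w : W}
    (h : G.Reachable v w) (hne : v ≠ w) : ∃ z, G.Adj v z := by
  obtain ⟨p⟩ := h
  cases p with
  | nil => exact absurd rfl hne
  | cons h _ => exact ⟨_, h⟩

lemma two_le_degree_of_twoConnected (G : SimpleGraph V) [DecidableRel G.Adj]
    (h2c : TwoConnected G) (v : V) : 2 ≤ G.degree v := by
  obtain ⟨hconn, hcard, hdel⟩ := h2c
  obtain ⟨w, hw⟩ : ∃ w : V, w ≠ v := Fintype.exists_ne_of_one_lt_card (by omega) v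
  obtain ⟨x, hx⟩ : ∃ x, G.Adj v x :=
    exists_adj_of_reachable' (hconn.preconnected v w) hw.symm
  have hvx : v ≠ x := hx.ne
  obtain ⟨y, hy⟩ : ∃ y, y ∉ ({v, x} : Finset V) := by
    by_contra h
    push_neg at h
    have hsub : (Finset.univ : Finset V) ⊆ {v, x} := fun z _ => h z
    have h1 := Finset.card_le_card hsub
    have h2 : ({v, x} : Finset V).card ≤ 2 := by
      calc ({v, x} : Finset V).card ≤ ({x} : Finset V).card + 1 :=
            Finset.card_insert_le v {x}
        _ = 2 := by simp
    simp only [Finset.card_univ] at h1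
    omega
  simp only [Finset.mem_insert, Finset.mem_singleton, not_or] at hy
  have hvS : v ∈ {w : V | w ≠ x} := hvx
  have hyS : y ∈ {w : V | w ≠ x} := hy.2
  have hne : (⟨v, hvS⟩ : {w : V | w ≠ x}) ≠ ⟨y, hyS⟩ := by
    intro h
    exact hy.1 (congrArg Subtype.val h).symm
  obtain ⟨z, hz⟩ := exists_adj_of_reachable'
    ((hdel x).preconnected ⟨v, hvS⟩ ⟨y, hyS⟩) hne
  have hadj : G.Adj v z.1 := hz
  have hzx : z.1 ≠ x := z.2
  rw [← SimpleGraph.card_neighborFinset_eq_degree]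
  exact Finset.one_lt_card.mpr
    ⟨x, by simpa using hx, z.1, by simpa using hadj, fun h => hzx h.symm⟩

lemma delTwo_neighborFinset (G : SimpleGraph V) [DecidableRel G.Adj] (u : V)
    (hu : 3 ≤ G.degree u) :
    (delTwo G).neighborFinset u =
      (G.neighborFinset u).filter fun w => 3 ≤ G.degree w := by
  ext w
  simp only [SimpleGraph.mem_neighborFinset, Finset.mem_filter]
  constructor
  · intro h
    exact ⟨h.1, h.2.2⟩
  · intro h
    exact ⟨h.1, hu, h.2⟩

lemma delTwo_degree_eq (G : SimpleGraph V) [DecidableRel G.Adj]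
    (h2c : TwoConnected G) (u : V) (hu : 3 ≤ G.degree u) :
    (delTwo G).degree u = G.degree u - nk G u 2 := by
  rw [← SimpleGraph.card_neighborFinset_eq_degree, delTwo_neighborFinset G u hu]
  have hfc : (G.neighborFinset u).filter (fun w => 3 ≤ G.degree w) =
      (G.neighborFinset u).filter (fun w => ¬ G.degree w = 2) := by
    apply Finset.filter_congr
    intro w hw
    have := two_le_degree_of_twoConnected G h2c w
    constructor <;> (intro h; omega)
  rw [hfc, Finset.filter_not, Finset.card_sdiff_of_subset (Finset.filter_subset _ _)]
  rw [SimpleGraph.card_neighborFinset_eq_degree]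
  rfl

lemma nk2_le (G : SimpleGraph V) [DecidableRel G.Adj] (u : V) :
    nk G u 2 ≤ G.degree u := by
  rw [← SimpleGraph.card_neighborFinset_eq_degree]
  exact Finset.card_filter_le _ _

lemma key_iff (G : SimpleGraph V) [DecidableRel G.Adj]
    (h2c : TwoConnected G)
    (hi : ∀ v w : V, G.Adj v w → G.degree v = 2 → ¬ G.degree w ≤ 5)
    (hii : ∀ z : V, 6 ≤ G.degree z → (∃ t, G.Adj z t ∧ G.degree t = 2) →
      nk G z 2 + nk G z 3 ≤ G.degree z - 3)
    (hiii : ∀ z : V, 6 ≤ G.degree z → (∃ t, G.Adj z t ∧ G.degree t = 2) →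
      ¬ (nk G z 2 + nk G z 3 = G.degree z - 3 ∧ nk G z 3 ≤ 3))
    (u : V) (hu : 3 ≤ G.degree u) :
    (delTwo G).degree u = 3 ↔ G.degree u = 3 := by
  have hdeg := delTwo_degree_eq G h2c u hu
  have hle := nk2_le G u
  constructor
  · intro h3
    by_contra hne
    have hu4 : 4 ≤ G.degree u := by omega
    have hnk2pos : 1 ≤ nk G u 2 := by omega
    obtain ⟨t, ht⟩ : ∃ t, G.Adj u t ∧ G.degree t = 2 := by
      unfold nk at hnk2pos
      obtain ⟨t, ht⟩ := Finset.card_pos.mp hnk2pos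
      simp only [Finset.mem_filter, SimpleGraph.mem_neighborFinset] at ht
      exact ⟨t, ht⟩
    have h6 : 6 ≤ G.degree u := by
      have := hi t u ht.1.symm ht.2
      omega
    have hii' := hii u h6 ⟨t, ht⟩
    have hnk2 : nk G u 2 = G.degree u - 3 := by omega
    have hnk3 : nk G u 3 = 0 := by omega
    exact hiii u h6 ⟨t, ht⟩ ⟨by omega, by omega⟩
  · intro h3
    have hnk2 : nk G u 2 = 0 := by
      unfold nk
      rw [Finset.card_eq_zero, Finset.filter_eq_empty_iff]
      intro w hw hdw
      rw [SimpleGraph.mem_neighborFinset] at hw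
      exact hi w u hw.symm hdw (by omega)
    omega

/-- In a 2-connected graph satisfying (i)–(iii), for every vertex `u` of `H`:
no `H`-neighbor of `u` has `G`-degree 2; `d_H(u) = 3 ↔ d(u) = 3`; and the number of
`H`-neighbors of `u` of `H`-degree 3 equals `n₃(u)`, the number of `G`-neighbors of `u`
of `G`-degree 3. -/
theorem stmt_5 (G : SimpleGraph V) [DecidableRel G.Adj]
    (h2c : TwoConnected G)
    (hi : ∀ v w : V, G.Adj v w → G.degree v = 2 → ¬ G.degree w ≤ 5)
    (hii : ∀ z : V, 6 ≤ G.degree z → (∃ t, G.Adj z t ∧ G.degree t = 2) →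
      nk G z 2 + nk G z 3 ≤ G.degree z - 3)
    (hiii : ∀ z : V, 6 ≤ G.degree z → (∃ t, G.Adj z t ∧ G.degree t = 2) →
      ¬ (nk G z 2 + nk G z 3 = G.degree z - 3 ∧ nk G z 3 ≤ 3)) :
    ∀ u : V, 3 ≤ G.degree u →
      (∀ w : V, (delTwo G).Adj u w → G.degree w ≠ 2) ∧
      ((delTwo G).degree u = 3 ↔ G.degree u = 3) ∧
      (((delTwo G).neighborFinset u).filter
          fun w => (delTwo G).degree w = 3).card = nk G u 3 := by
  intro u hu
  refine ⟨fun w hw => by have := hw.2.2; omega, key_iff G h2c hi hii hiii u hu, ?_⟩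
  have hset : ((delTwo G).neighborFinset u).filter
      (fun w => (delTwo G).degree w = 3) =
      (G.neighborFinset u).filter fun w => G.degree w = 3 := by
    ext w
    simp only [Finset.mem_filter, SimpleGraph.mem_neighborFinset]
    constructor
    · intro ⟨hadj, hd3⟩
      exact ⟨hadj.1, (key_iff G h2c hi hii hiii w hadj.2.2).mp hd3⟩
    · intro ⟨hadj, hd3⟩
      have hw3 : 3 ≤ G.degree w := by omega
      exact ⟨⟨hadj, hu, hw3⟩, (key_iff G h2c hi hii hiii w hw3).mpr hd3⟩
  rw [hset]
  rfl
end

section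
/- Let G be a simple 2-connected graph satisfying: (i) no vertex of degree 2 in G is adjacent to a vertex of degree at most 5; (ii) every vertex u of degree at least 6 that is adjacent to some 2-vertex satisfies n_2(u) + n_3(u) ≤ d(u) − 3; (iii) no vertex u of degree at least 6 adjacent to some 2-vertex satisfies both n_2(u) + n_3(u) = d(u) − 3 and n_3(u) ≤ 3; (iv) no two adjacent vertices of G both have degree 3; (v) G contains no triangle having both a vertex of degree 3 and a vertex of degree 4. If uvw is a triangle of H in which the minimum of the H-degrees of u, v, w equals 3, then exactly one of u, v, w has H-degree 3 and the other two have H-degree at least 5. -/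
variable {V : Type*} [Fintype V] [DecidableEq V]

lemma walk_eq_of_isolated {W : Type*} {G : SimpleGraph W} {a b : W}
    (h : ∀ c, ¬ G.Adj a c) (p : G.Walk a b) : a = b := by
  cases p with
  | nil => rfl
  | cons h' _ => exact absurd h' (h _)

lemma degree_ne_one {G : SimpleGraph V} [DecidableRel G.Adj] (h2c : TwoConnected G) :
    ∀ y : V, G.degree y ≠ 1 := by
  intro y hy
  obtain ⟨hconn, hcard, hdel⟩ := h2c
  obtain ⟨v, hv⟩ := Finset.card_eq_one.mp hy
  have hyv : G.Adj y v := by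
    have : v ∈ G.neighborFinset y := by rw [hv]; simp
    simpa using this
  have hne : y ≠ v := G.ne_of_adj hyv
  have hle : ({y, v} : Finset V).card < (Finset.univ : Finset V).card := by
    have h2 : ({y, v} : Finset V).card ≤ 2 :=
      (Finset.card_insert_le _ _).trans (by simp)
    have : (Finset.univ : Finset V).card = Fintype.card V := Finset.card_univ
    omega
  have hss : ({y, v} : Finset V) ⊂ Finset.univ :=
    Finset.ssubset_univ_iff.mpr (fun h => by rw [h] at hle; exact lt_irrefl _ hle)
  obtain ⟨z, -, hz⟩ := Finset.exists_of_ssubset hss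
  simp only [Finset.mem_insert, Finset.mem_singleton, not_or] at hz
  have hyz : (y : V) ≠ v := hne
  set G' := G.induce {w : V | w ≠ v} with hG'
  have hconn' := hdel v
  have hreach := hconn'.preconnected ⟨y, hne⟩ ⟨z, hz.2⟩
  obtain ⟨p⟩ := hreach
  have hiso : ∀ c, ¬ G'.Adj ⟨y, hne⟩ c := by
    rintro ⟨c, hc⟩ hadj
    have hGadj : G.Adj y c := hadj
    have : c ∈ G.neighborFinset y := by simpa using hGadj
    rw [hv] at this
    simp at this
    exact hc this
  have := walk_eq_of_isolated hiso p
  exact hz.1 (congrArg Subtype.val this).symm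

lemma nk_le_degree (G : SimpleGraph V) [DecidableRel G.Adj] (u : V) (m : ℕ) :
    nk G u m ≤ G.degree u :=
  Finset.card_filter_le _ _

lemma delTwo_degree (G : SimpleGraph V) [DecidableRel G.Adj]
    (hone : ∀ y, G.degree y ≠ 1) {v : V} (hv : 3 ≤ G.degree v) :
    (delTwo G).degree v = G.degree v - nk G v 2 := by
  have hset : (delTwo G).neighborFinset v =
      (G.neighborFinset v).filter (fun y => ¬ G.degree y = 2) := by
    ext y
    rw [SimpleGraph.mem_neighborFinset]
    simp only [SimpleGraph.mem_neighborFinset, Finset.mem_filter, delTwo]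
    constructor
    · rintro ⟨ha, -, h3⟩
      exact ⟨ha, by omega⟩
    · rintro ⟨ha, h2⟩
      have hpos : 0 < G.degree y := by
        rw [SimpleGraph.degree]
        exact Finset.card_pos.mpr ⟨v, by simpa using ha.symm⟩
      have := hone y
      exact ⟨ha, hv, by omega⟩
  have hsplit := Finset.card_filter_add_card_filter_not
      (s := G.neighborFinset v) (p := fun y => G.degree y = 2)
  have hdeg : (delTwo G).degree v =
      ((G.neighborFinset v).filter (fun y => ¬ G.degree y = 2)).card := by
    rw [SimpleGraph.degree, hset]
  have hnk : nk G v 2 = ((G.neighborFinset v).filter (fun y => G.degree y = 2)).card := rfl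
  have : (G.neighborFinset v).card = G.degree v := rfl
  omega

lemma nk_pos_exists (G : SimpleGraph V) [DecidableRel G.Adj] {u : V} {m : ℕ}
    (h : 0 < nk G u m) : ∃ t, G.Adj u t ∧ G.degree t = m := by
  obtain ⟨t, ht⟩ := Finset.card_pos.mp h
  simp only [Finset.mem_filter, SimpleGraph.mem_neighborFinset] at ht
  exact ⟨t, ht⟩

lemma degG_of_dH3 (G : SimpleGraph V) [DecidableRel G.Adj]
    (hone : ∀ y, G.degree y ≠ 1)
    (hi : ∀ v w : V, G.Adj v w → G.degree v = 2 → ¬ G.degree w ≤ 5)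
    (hii : ∀ z : V, 6 ≤ G.degree z → (∃ t, G.Adj z t ∧ G.degree t = 2) →
      nk G z 2 + nk G z 3 ≤ G.degree z - 3)
    (hiii : ∀ z : V, 6 ≤ G.degree z → (∃ t, G.Adj z t ∧ G.degree t = 2) →
      ¬ (nk G z 2 + nk G z 3 = G.degree z - 3 ∧ nk G z 3 ≤ 3))
    {u : V} (hu : (delTwo G).degree u = 3) : G.degree u = 3 := by
  have hpos : 0 < (delTwo G).degree u := by omega
  obtain ⟨t0, ht0⟩ := Finset.card_pos.mp hpos
  rw [SimpleGraph.mem_neighborFinset] at ht0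
  have hdu : 3 ≤ G.degree u := ht0.2.1
  have hdeg := delTwo_degree G hone hdu
  have hnkle := nk_le_degree G u 2
  by_cases hn : nk G u 2 = 0
  · omega
  · obtain ⟨t, hta, htd⟩ := nk_pos_exists G (by omega : 0 < nk G u 2)
    have h6 : 6 ≤ G.degree u := by
      have := hi t u hta.symm htd
      omega
    have h2 := hii u h6 ⟨t, hta, htd⟩
    exact absurd ⟨by omega, by omega⟩ (hiii u h6 ⟨t, hta, htd⟩)

lemma dH_ge_five (G : SimpleGraph V) [DecidableRel G.Adj]
    (hone : ∀ y, G.degree y ≠ 1)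
    (hi : ∀ v w : V, G.Adj v w → G.degree v = 2 → ¬ G.degree w ≤ 5)
    (hii : ∀ z : V, 6 ≤ G.degree z → (∃ t, G.Adj z t ∧ G.degree t = 2) →
      nk G z 2 + nk G z 3 ≤ G.degree z - 3)
    (hiii : ∀ z : V, 6 ≤ G.degree z → (∃ t, G.Adj z t ∧ G.degree t = 2) →
      ¬ (nk G z 2 + nk G z 3 = G.degree z - 3 ∧ nk G z 3 ≤ 3))
    {u v : V} (hadj : G.Adj v u) (hu3 : G.degree u = 3)
    (hv3 : 3 ≤ G.degree v) (hvne3 : G.degree v ≠ 3) (hvne4 : G.degree v ≠ 4) :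
    5 ≤ (delTwo G).degree v := by
  have hdeg := delTwo_degree G hone hv3
  have h5 : 5 ≤ G.degree v := by omega
  by_cases hn : nk G v 2 = 0
  · omega
  · obtain ⟨t, hta, htd⟩ := nk_pos_exists G (by omega : 0 < nk G v 2)
    have h6 : 6 ≤ G.degree v := by
      have := hi t v hta.symm htd
      omega
    have h2 := hii v h6 ⟨t, hta, htd⟩
    have hnk3 : 1 ≤ nk G v 3 := by
      refine Finset.card_pos.mpr ⟨u, ?_⟩
      simp [nk, SimpleGraph.mem_neighborFinset, hadj, hu3]
    by_contra hlt
    exact hiii v h6 ⟨t, hta, htd⟩ ⟨by omega, by omega⟩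

lemma triangle_case (G : SimpleGraph V) [DecidableRel G.Adj]
    (hone : ∀ y, G.degree y ≠ 1)
    (hi : ∀ v w : V, G.Adj v w → G.degree v = 2 → ¬ G.degree w ≤ 5)
    (hii : ∀ z : V, 6 ≤ G.degree z → (∃ t, G.Adj z t ∧ G.degree t = 2) →
      nk G z 2 + nk G z 3 ≤ G.degree z - 3)
    (hiii : ∀ z : V, 6 ≤ G.degree z → (∃ t, G.Adj z t ∧ G.degree t = 2) →
      ¬ (nk G z 2 + nk G z 3 = G.degree z - 3 ∧ nk G z 3 ≤ 3))
    (hiv : ∀ v w : V, G.Adj v w → G.degree v = 3 → G.degree w ≠ 3)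
    (hv : ∀ a b c : V, G.Adj a b → G.Adj b c → G.Adj c a →
      ¬ ((G.degree a = 3 ∨ G.degree b = 3 ∨ G.degree c = 3) ∧
         (G.degree a = 4 ∨ G.degree b = 4 ∨ G.degree c = 4)))
    {u v w : V} (huv : (delTwo G).Adj u v) (hvw : (delTwo G).Adj v w)
    (hwu : (delTwo G).Adj w u) (hu : (delTwo G).degree u = 3) :
    5 ≤ (delTwo G).degree v ∧ 5 ≤ (delTwo G).degree w := by
  have hu3 : G.degree u = 3 := degG_of_dH3 G hone hi hii hiii hu
  have hvne3 : G.degree v ≠ 3 := hiv u v huv.1 hu3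
  have hwne3 : G.degree w ≠ 3 := hiv u w hwu.1.symm hu3
  have hno4 := hv u v w huv.1 hvw.1 hwu.1
  have hvne4 : G.degree v ≠ 4 := by
    intro h4; exact hno4 ⟨Or.inl hu3, Or.inr (Or.inl h4)⟩
  have hwne4 : G.degree w ≠ 4 := by
    intro h4; exact hno4 ⟨Or.inl hu3, Or.inr (Or.inr h4)⟩
  exact ⟨dH_ge_five G hone hi hii hiii huv.1.symm hu3 huv.2.2 hvne3 hvne4,
    dH_ge_five G hone hi hii hiii hwu.1 hu3 hwu.2.1 hwne3 hwne4⟩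

/-- In a 2-connected graph satisfying (i)–(v): every triangle of `H` whose minimum
`H`-degree is 3 has exactly one vertex of `H`-degree 3, the other two having `H`-degree
at least 5. -/
theorem stmt_7 (G : SimpleGraph V) [DecidableRel G.Adj]
    (h2c : TwoConnected G)
    (hi : ∀ v w : V, G.Adj v w → G.degree v = 2 → ¬ G.degree w ≤ 5)
    (hii : ∀ z : V, 6 ≤ G.degree z → (∃ t, G.Adj z t ∧ G.degree t = 2) →
      nk G z 2 + nk G z 3 ≤ G.degree z - 3)
    (hiii : ∀ z : V, 6 ≤ G.degree z → (∃ t, G.Adj z t ∧ G.degree t = 2) →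
      ¬ (nk G z 2 + nk G z 3 = G.degree z - 3 ∧ nk G z 3 ≤ 3))
    (hiv : ∀ v w : V, G.Adj v w → G.degree v = 3 → G.degree w ≠ 3)
    (hv : ∀ a b c : V, G.Adj a b → G.Adj b c → G.Adj c a →
      ¬ ((G.degree a = 3 ∨ G.degree b = 3 ∨ G.degree c = 3) ∧
         (G.degree a = 4 ∨ G.degree b = 4 ∨ G.degree c = 4))) :
    ∀ u v w : V, (delTwo G).Adj u v → (delTwo G).Adj v w → (delTwo G).Adj w u →
      min (min ((delTwo G).degree u) ((delTwo G).degree v)) ((delTwo G).degree w) = 3 →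
      ((delTwo G).degree u = 3 ∧ 5 ≤ (delTwo G).degree v ∧ 5 ≤ (delTwo G).degree w) ∨
      ((delTwo G).degree v = 3 ∧ 5 ≤ (delTwo G).degree u ∧ 5 ≤ (delTwo G).degree w) ∨
      ((delTwo G).degree w = 3 ∧ 5 ≤ (delTwo G).degree u ∧ 5 ≤ (delTwo G).degree v) := by
  intro u v w huv hvw hwu hmin
  have hone := degree_ne_one h2c
  have hcases : (delTwo G).degree u = 3 ∨ (delTwo G).degree v = 3 ∨
      (delTwo G).degree w = 3 := by omega
  rcases hcases with h | h | h
  · obtain ⟨h1, h2⟩ := triangle_case G hone hi hii hiii hiv hv huv hvw hwu h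
    exact Or.inl ⟨h, h1, h2⟩
  · obtain ⟨h1, h2⟩ := triangle_case G hone hi hii hiii hiv hv hvw hwu huv h
    exact Or.inr (Or.inl ⟨h, h2, h1⟩)
  · obtain ⟨h1, h2⟩ := triangle_case G hone hi hii hiii hiv hv hwu huv hvw h
    exact Or.inr (Or.inr ⟨h, h1, h2⟩)
end

section
/- Let G be a simple 2-connected graph satisfying: (i) no vertex of degree 2 in G is adjacent to a vertex of degree at most 5; (ii) every vertex u of degree at least 6 that is adjacent to some 2-vertex satisfies n_2(u) + n_3(u) ≤ d(u) − 3; (iii) no vertex u of degree at least 6 adjacent to some 2-vertex satisfies both n_2(u) + n_3(u) = d(u) − 3 and n_3(u) ≤ 3; (iv) no vertex of degree 5 in G has three or more neighbors of degree 3. If u is a vertex of H with d_H(u) = 5, then n_3(u) ≤ 2, and moreover if n_3(u) = 2 then d(u) = 5. -/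
variable {V : Type*} [Fintype V] [DecidableEq V]

lemma mindeg (G : SimpleGraph V) [DecidableRel G.Adj] (h2c : TwoConnected G)
    {t v : V} (h : G.Adj t v) : 2 ≤ G.degree t := by
  obtain ⟨hconn, hcard, hdel⟩ := h2c
  have hex : ∃ x : V, x ≠ t ∧ x ≠ v := by
    by_contra hx
    push_neg at hx
    have hsub : (Finset.univ : Finset V) ⊆ {t, v} := by
      intro y _
      rcases eq_or_ne y t with rfl | hyt
      · simp
      · simp [hx y hyt]
    have h1 := Finset.card_le_card hsub
    have h2 : ({t, v} : Finset V).card ≤ 2 :=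
      (Finset.card_insert_le _ _).trans (by simp)
    rw [Finset.card_univ] at h1
    omega
  obtain ⟨x, hxt, hxv⟩ := hex
  have hr := (hdel v).preconnected ⟨t, h.ne⟩ ⟨x, hxv⟩
  obtain ⟨p⟩ := hr
  have hne : (⟨t, h.ne⟩ : {w : V // w ≠ v}) ≠ ⟨x, hxv⟩ := by
    simp [Subtype.ext_iff]; exact fun hh => hxt hh.symm
  have hnil : ¬ p.Nil := SimpleGraph.Walk.not_nil_of_ne hne
  have hadj := p.adj_snd hnil
  simp only [SimpleGraph.comap_adj, Function.Embedding.coe_subtype] at hadj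
  set w := p.getVert 1 with hw
  have hwv : (w : V) ≠ v := w.2
  have : ({v, (w : V)} : Finset V) ⊆ G.neighborFinset t := by
    intro y hy
    simp only [Finset.mem_insert, Finset.mem_singleton] at hy
    rcases hy with rfl | rfl
    · exact (G.mem_neighborFinset _ _).mpr h
    · exact (G.mem_neighborFinset _ _).mpr hadj
  calc 2 = ({v, (w : V)} : Finset V).card := by
        rw [Finset.card_insert_of_notMem (by simp [Ne.symm hwv]), Finset.card_singleton]
      _ ≤ _ := Finset.card_le_card this
  done

/-- In a 2-connected graph satisfying (i)–(iv): if `u` is a vertex of `H` with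
`d_H(u) = 5`, then `n₃(u) ≤ 2`, and if `n₃(u) = 2` then `d(u) = 5`. -/
theorem stmt_9 (G : SimpleGraph V) [DecidableRel G.Adj]
    (h2c : TwoConnected G)
    (hi : ∀ v w : V, G.Adj v w → G.degree v = 2 → ¬ G.degree w ≤ 5)
    (hii : ∀ z : V, 6 ≤ G.degree z → (∃ t, G.Adj z t ∧ G.degree t = 2) →
      nk G z 2 + nk G z 3 ≤ G.degree z - 3)
    (hiii : ∀ z : V, 6 ≤ G.degree z → (∃ t, G.Adj z t ∧ G.degree t = 2) →
      ¬ (nk G z 2 + nk G z 3 = G.degree z - 3 ∧ nk G z 3 ≤ 3))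
    (hiv : ∀ v : V, G.degree v = 5 → nk G v 3 ≤ 2) :
    ∀ u : V, 3 ≤ G.degree u → (delTwo G).degree u = 5 →
      nk G u 3 ≤ 2 ∧ (nk G u 3 = 2 → G.degree u = 5) := by
  intro u hu hH
  set N := G.neighborFinset u with hN
  -- the delTwo neighborhood is the filter of high-degree neighbors
  have hHnbr : (delTwo G).neighborFinset u = N.filter (fun w => 3 ≤ G.degree w) := by
    ext w
    rw [SimpleGraph.mem_neighborFinset]
    simp only [SimpleGraph.mem_neighborFinset, Finset.mem_filter, hN, delTwo]
    tauto
  have hsplit : (N.filter (fun w => 3 ≤ G.degree w)).card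
      + (N.filter (fun w => ¬ 3 ≤ G.degree w)).card = N.card :=
    Finset.card_filter_add_card_filter_not _
  have hlow : N.filter (fun w => ¬ 3 ≤ G.degree w) = N.filter (fun w => G.degree w = 2) := by
    apply Finset.filter_congr
    intro w hw
    have hadj : G.Adj u w := (G.mem_neighborFinset u w).mp hw
    have h2 : 2 ≤ G.degree w := mindeg G h2c hadj.symm
    constructor
    · intro hlt; omega
    · intro he; omega
  have hdegH : (delTwo G).degree u = (N.filter (fun w => 3 ≤ G.degree w)).card := by
    rw [SimpleGraph.degree, hHnbr]
  have hdeg : G.degree u = N.card := rfl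
  have hn2 : nk G u 2 = (N.filter (fun w => ¬ 3 ≤ G.degree w)).card := by
    rw [hlow]; rfl
  have key : G.degree u = 5 + nk G u 2 := by
    rw [hdeg, hn2, ← hsplit, ← hdegH, hH]
  rcases Nat.eq_zero_or_pos (nk G u 2) with h0 | hpos
  · have h5 : G.degree u = 5 := by omega
    exact ⟨hiv u h5, fun _ => h5⟩
  · -- there is a 2-neighbor
    have hne : (N.filter (fun w => G.degree w = 2)).Nonempty :=
      Finset.card_pos.mp (by simpa [nk] using hpos)
    obtain ⟨t, ht⟩ := hne
    simp only [Finset.mem_filter, hN, SimpleGraph.mem_neighborFinset] at ht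
    have hex : ∃ t, G.Adj u t ∧ G.degree t = 2 := ⟨t, ht.1, ht.2⟩
    have h6 : 6 ≤ G.degree u := by omega
    have hA := hii u h6 hex
    have hB := hiii u h6 hex
    have hn3 : nk G u 3 ≤ 2 := by omega
    refine ⟨hn3, fun h2 => ?_⟩
    exfalso
    exact hB ⟨by omega, by omega⟩
end

section
/- Let G be a simple graph, uv an edge of G, c an acyclic edge k-coloring of H := G − uv, and j a color in {1,…,k} with j ∉ C(u) ∪ C(v). Then the extension c′ of c defined by c′(uv) = j is a proper edge k-coloring of G, and c′ is acyclic if and only if there is no color i ∈ C(u) ∩ C(v) for which H contains a path from u to v whose edges alternate between the colors i and j and whose first and last edges are both colored i. -/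
variable {V : Type*}

/-- `C(u)`: the set of colors appearing on the edges of `G` incident to `u`. -/
def colorsAt (G : SimpleGraph V) (c : Sym2 V → ℕ) (u : V) : Set ℕ :=
  {n | ∃ e ∈ G.edgeSet, u ∈ e ∧ c e = n}

/-- `AltColors a b l` holds when the list `l` of colors alternates `a, b, a, b, …`,
starting with `a`. -/
def AltColors : ℕ → ℕ → List ℕ → Prop
  | _, _, [] => True
  | a, b, x :: l => x = a ∧ AltColors b a l

/- ### Auxiliary lemmas -/

lemma altColors_mem : ∀ {a b : ℕ} {l : List ℕ}, AltColors a b l → ∀ x ∈ l, x = a ∨ x = b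
  | _, _, [], _, _, hx => absurd hx List.not_mem_nil
  | _, _, _ :: _, h, x, hx => by
    rcases List.mem_cons.1 hx with rfl | hx
    · exact Or.inl h.1
    · exact (altColors_mem h.2 x hx).symm

lemma altColors_of_chain : ∀ {a b : ℕ} (l : List ℕ), (∀ x ∈ l, x = a ∨ x = b) →
    List.Chain' (· ≠ ·) (a :: l) → AltColors a b (a :: l)
  | _, _, [], _, _ => ⟨rfl, trivial⟩
  | a, b, y :: l, hm, hch => by
    have h1 : a ≠ y := (List.isChain_cons_cons.1 hch).1
    have h2 : List.Chain' (· ≠ ·) (y :: l) := (List.isChain_cons_cons.1 hch).2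
    have hy : y = b := (hm y (by simp)).resolve_left (fun h => h1 h.symm)
    subst hy
    exact ⟨rfl, altColors_of_chain l (fun x hx => (hm x (by simp [hx])).symm) h2⟩

lemma edges_chain_share {G : SimpleGraph V} : ∀ {x y : V} (p : G.Walk x y),
    List.Chain' (fun e f => ∃ z, z ∈ e ∧ z ∈ f) p.edges ∧
      ∀ e ∈ p.edges.head?, x ∈ e
  | _, _, SimpleGraph.Walk.nil => ⟨List.isChain_nil, by simp⟩
  | _, _, SimpleGraph.Walk.cons (v := b) _ q => by
    obtain ⟨hch, hhd⟩ := edges_chain_share q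
    refine ⟨?_, ?_⟩
    · rw [SimpleGraph.Walk.edges_cons]
      refine List.isChain_cons.2 ⟨?_, hch⟩
      intro e he
      exact ⟨b, by simp, hhd e he⟩
    · intro e he
      rw [SimpleGraph.Walk.edges_cons] at he
      simp only [List.head?_cons, Option.mem_some_iff] at he
      subst he; simp

lemma chain'_and {α : Type*} {R S : α → α → Prop} : ∀ {l : List α},
    List.Chain' R l → List.Chain' S l → List.Chain' (fun a b => R a b ∧ S a b) l
  | [], _, _ => List.isChain_nil
  | [_], _, _ => List.isChain_singleton _
  | _ :: _ :: _, hR, hS =>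
    List.isChain_cons_cons.2 ⟨⟨(List.isChain_cons_cons.1 hR).1, (List.isChain_cons_cons.1 hS).1⟩,
      chain'_and (List.isChain_cons_cons.1 hR).2 (List.isChain_cons_cons.1 hS).2⟩

lemma chain'_map_of_mem' {α β : Type*} {R : α → α → Prop} {S : β → β → Prop} (f : α → β) :
    ∀ {l : List α}, List.Chain' R l →
      (∀ a ∈ l, ∀ b ∈ l, R a b → S (f a) (f b)) → List.Chain' S (l.map f)
  | [], _, _ => by exact List.isChain_nil
  | [_], _, _ => by exact List.isChain_singleton _
  | a :: b :: l, hR, H => by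
    simp only [List.map_cons]
    refine List.isChain_cons_cons.2 ⟨H a (by simp) b (by simp) (List.isChain_cons_cons.1 hR).1, ?_⟩
    have := chain'_map_of_mem' f (List.isChain_cons_cons.1 hR).2
      (fun p hp q hq h => H p (by simp [hp]) q (by simp [hq]) h)
    exact this

lemma mapLe_edges {G G' : SimpleGraph V} (h : G ≤ G') {x y : V} (p : G.Walk x y) :
    (p.mapLe h).edges = p.edges := by
  rw [SimpleGraph.Walk.mapLe, SimpleGraph.Walk.edges_map]
  conv_rhs => rw [← List.map_id p.edges]
  refine List.map_congr_left (fun e _ => ?_)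
  have h2 : ⇑(SimpleGraph.Hom.ofLE h) = fun x : V => x := rfl
  rw [h2, Sym2.map_id']

lemma trail_colors_chain {G : SimpleGraph V} {k : ℕ} {cc : Sym2 V → ℕ}
    (hP : ProperEdgeColoring G k cc) {x y : V} (p : G.Walk x y) (hp : p.IsTrail) :
    List.Chain' (· ≠ ·) (p.edges.map cc) := by
  have h1 := (edges_chain_share p).1
  have h2 : List.Chain' (· ≠ ·) p.edges := List.Pairwise.isChain hp.edges_nodup
  exact chain'_map_of_mem' cc (chain'_and h1 h2)
    (fun e he f hf hef => hP.2 e (p.edges_subset_edgeSet he) f (p.edges_subset_edgeSet hf)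
      hef.2 hef.1)

lemma head_edge_of_mem {G : SimpleGraph V} {x y : V} (p : G.Walk x y)
    (hx : x ∉ p.support.tail) {e : Sym2 V} (he : e ∈ p.edges) (hxe : x ∈ e) :
    p.edges.head? = some e := by
  cases p with
  | nil => simp at he
  | cons h r =>
    rw [SimpleGraph.Walk.edges_cons] at he
    rcases List.mem_cons.1 he with rfl | he'
    · simp
    · exfalso
      apply hx
      rw [SimpleGraph.Walk.support_cons, List.tail_cons]
      obtain ⟨y', rfl⟩ := Sym2.mem_iff_exists.1 hxe
      exact r.fst_mem_support_of_mem_edges he'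

lemma isCycle_reverse {G : SimpleGraph V} {u : V} {w : G.Walk u u} (hw : w.IsCycle) :
    w.reverse.IsCycle := by
  obtain ⟨b, h, q, rfl⟩ := SimpleGraph.Walk.not_nil_iff.1 hw.isCircuit.not_nil
  obtain ⟨hq, hsb⟩ := (SimpleGraph.Walk.cons_isCycle_iff q h).1 hw
  have hqrev : q.reverse.IsPath := hq.reverse
  obtain ⟨z, h2, r, hqr⟩ := SimpleGraph.Walk.not_nil_iff.1
    (SimpleGraph.Walk.not_nil_of_ne h.ne : ¬ q.reverse.Nil)
  rw [SimpleGraph.Walk.reverse_cons, hqr, SimpleGraph.Walk.cons_append,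
    ← SimpleGraph.Walk.concat_eq_append]
  rw [hqr] at hqrev
  have hrpath : r.IsPath := ((SimpleGraph.Walk.cons_isPath_iff h2 r).1 hqrev).1
  have hur : u ∉ r.support := ((SimpleGraph.Walk.cons_isPath_iff h2 r).1 hqrev).2
  rw [SimpleGraph.Walk.cons_isCycle_iff]
  constructor
  · have heq : r.concat h.symm = (SimpleGraph.Walk.cons h r.reverse).reverse := by
      rw [SimpleGraph.Walk.concat_eq_append, SimpleGraph.Walk.reverse_cons,
        SimpleGraph.Walk.reverse_reverse]
    rw [heq]
    apply SimpleGraph.Walk.IsPath.reverse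
    rw [SimpleGraph.Walk.cons_isPath_iff]
    refine ⟨hrpath.reverse, ?_⟩
    rwa [SimpleGraph.Walk.support_reverse, List.mem_reverse]
  · rw [SimpleGraph.Walk.edges_concat, List.concat_eq_append, List.mem_append]
    rintro (hin | hin)
    · obtain ⟨y', hy'⟩ := Sym2.mem_iff_exists.1 (Sym2.mem_mk_left u z)
      exact hur (r.fst_mem_support_of_mem_edges (hy' ▸ hin))
    · have h1 : s(u, z) ∈ q.edges := by
        have : s(u, z) ∈ q.reverse.edges := by
          rw [hqr, SimpleGraph.Walk.edges_cons]; simp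
        rwa [SimpleGraph.Walk.edges_reverse, List.mem_reverse] at this
      rw [List.mem_singleton] at hin
      rw [hin, Sym2.eq_swap] at h1
      exact hsb h1

open SimpleGraph Walk

/-- Let `c` be an acyclic edge `k`-coloring of `H = G − uv` and `j ∈ {1, …, k}` a color
outside `C(u) ∪ C(v)`.  Then the extension `c'` of `c` with `c'(uv) = j` is a proper
edge `k`-coloring of `G`, and it is acyclic iff there is no color `i ∈ C(u) ∩ C(v)`
such that `H` contains a path from `u` to `v` whose edges alternate between the colors
`i` and `j`, starting and ending with an edge colored `i`. -/
theorem stmt_12 [DecidableEq V] (G : SimpleGraph V) (u v : V) (huv : G.Adj u v)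
    (k : ℕ) (c : Sym2 V → ℕ)
    (hc : AcyclicEdgeColoring (G.deleteEdges {s(u, v)}) k c)
    (j : ℕ) (hj : j ∈ Finset.Icc 1 k)
    (hj' : j ∉ colorsAt (G.deleteEdges {s(u, v)}) c u ∪
      colorsAt (G.deleteEdges {s(u, v)}) c v) :
    ProperEdgeColoring G k (fun e => if e = s(u, v) then j else c e) ∧
    (AcyclicEdgeColoring G k (fun e => if e = s(u, v) then j else c e) ↔
      ¬ ∃ i : ℕ, i ∈ colorsAt (G.deleteEdges {s(u, v)}) c u ∧
        i ∈ colorsAt (G.deleteEdges {s(u, v)}) c v ∧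
        ∃ p : (G.deleteEdges {s(u, v)}).Walk u v, p.IsPath ∧
          AltColors i j (p.edges.map c) ∧ (p.edges.map c).getLast? = some i) := by
  classical
  set H := G.deleteEdges {s(u, v)} with hH
  set c' : Sym2 V → ℕ := fun e => if e = s(u, v) then j else c e with hcdef
  have hne : u ≠ v := huv.ne
  have hHG : H ≤ G := SimpleGraph.deleteEdges_le _
  have hHedge : ∀ e : Sym2 V, e ∈ H.edgeSet ↔ e ∈ G.edgeSet ∧ e ≠ s(u, v) := by
    intro e
    rw [hH, SimpleGraph.edgeSet_deleteEdges]
    simp [Set.mem_diff]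
  have hc'eq : ∀ e : Sym2 V, e ≠ s(u, v) → c' e = c e := fun e he => if_neg he
  have hc'suv : c' s(u, v) = j := if_pos rfl
  have hjU : j ∉ colorsAt H c u := fun h => hj' (Or.inl h)
  have hjV : j ∉ colorsAt H c v := fun h => hj' (Or.inr h)
  have hsuvG : s(u, v) ∈ G.edgeSet := G.mem_edgeSet.2 huv
  -- Properness
  have hP : ProperEdgeColoring G k c' := by
    constructor
    · intro e he
      by_cases h : e = s(u, v)
      · rw [h, hc'suv]; exact hj
      · rw [hc'eq e h]; exact hc.1.1 e ((hHedge e).2 ⟨he, h⟩)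
    · rintro e₁ h1 e₂ h2 hne12 ⟨x, hx1, hx2⟩
      by_cases a1 : e₁ = s(u, v) <;> by_cases a2 : e₂ = s(u, v)
      · exact absurd (a1.trans a2.symm) hne12
      · subst a1
        rw [hc'suv, hc'eq e₂ a2]
        intro hje
        have he2H : e₂ ∈ H.edgeSet := (hHedge e₂).2 ⟨h2, a2⟩
        have hx' : x = u ∨ x = v := by simpa using hx1
        rcases hx' with rfl | rfl
        · exact hjU ⟨e₂, he2H, hx2, hje.symm⟩
        · exact hjV ⟨e₂, he2H, hx2, hje.symm⟩
      · subst a2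
        rw [hc'suv, hc'eq e₁ a1]
        intro hje
        have he1H : e₁ ∈ H.edgeSet := (hHedge e₁).2 ⟨h1, a1⟩
        have hx' : x = u ∨ x = v := by simpa using hx2
        rcases hx' with rfl | rfl
        · exact hjU ⟨e₁, he1H, hx1, hje⟩
        · exact hjV ⟨e₁, he1H, hx1, hje⟩
      · rw [hc'eq e₁ a1, hc'eq e₂ a2]
        exact hc.1.2 e₁ ((hHedge e₁).2 ⟨h1, a1⟩) e₂ ((hHedge e₂).2 ⟨h2, a2⟩) hne12 ⟨x, hx1, hx2⟩
  refine ⟨hP, ?_, fun hn => ⟨hP, ?_⟩⟩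
  -- Forward direction
  · rintro hA ⟨i, hiu, hiv, p, hp, halt, hlast⟩
    have hpe : ∀ e ∈ p.edges, e ∈ H.edgeSet := fun e he => p.edges_subset_edgeSet he
    have hpm_edges : (p.mapLe hHG).edges = p.edges := mapLe_edges hHG p
    have hcyc : (Walk.cons huv (p.mapLe hHG).reverse).IsCycle := by
      rw [Walk.cons_isCycle_iff]
      refine ⟨(hp.mapLe hHG).reverse, ?_⟩
      rw [Walk.edges_reverse, List.mem_reverse, hpm_edges]
      intro hmem
      exact ((hHedge _).1 (hpe _ hmem)).2 rfl
    refine hA.2 u _ hcyc ⟨j, i, ?_⟩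
    intro e he
    rw [Walk.edges_cons, List.mem_cons] at he
    rcases he with rfl | he
    · exact Or.inl hc'suv
    · rw [Walk.edges_reverse, List.mem_reverse, hpm_edges] at he
      rw [hc'eq e ((hHedge e).1 (hpe e he)).2]
      have := altColors_mem halt (c e) (List.mem_map_of_mem (f := c) he)
      tauto
  -- Backward direction
  · rintro x w hw ⟨a, b, hab⟩
    by_cases hsm : s(u, v) ∈ w.edges
    · -- cycle through uv
      have hu' : u ∈ w.support := w.fst_mem_support_of_mem_edges hsm
      have hw1 : (w.rotate u hu').IsCycle := hw.rotate hu'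
      have hmem1 : ∀ e : Sym2 V, e ∈ (w.rotate u hu').edges ↔ e ∈ w.edges :=
        fun e => (w.rotate_edges u hu').perm.mem_iff
      obtain ⟨bb, h, q, hw1eq⟩ := Walk.not_nil_iff.1 hw1.isCircuit.not_nil
      rw [hw1eq] at hw1 hmem1
      obtain ⟨hqp, hsbq⟩ := (Walk.cons_isCycle_iff q h).1 hw1
      have key : ∃ (h' : G.Adj u v) (q' : G.Walk v u), (Walk.cons h' q').IsCycle ∧
          ∀ e ∈ (Walk.cons h' q').edges, c' e = a ∨ c' e = b := by
        by_cases hbv : s(u, bb) = s(u, v)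
        · obtain rfl : bb = v := Sym2.congr_right.1 hbv
          exact ⟨h, q, hw1, fun e he => hab e ((hmem1 e).1 he)⟩
        · have hsmq : s(u, v) ∈ q.edges := by
            have h0 := (hmem1 _).2 hsm
            rw [Walk.edges_cons, List.mem_cons] at h0
            exact h0.resolve_left (fun hh => hbv hh.symm)
          have hqrev : q.reverse.IsPath := hqp.reverse
          obtain ⟨z, h2, r, hqr⟩ := Walk.not_nil_iff.1
            (Walk.not_nil_of_ne h.ne : ¬ q.reverse.Nil)
          have hhead : q.reverse.edges.head? = some s(u, v) := by
            apply head_edge_of_mem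
            · have := hqrev.support_nodup
              rw [q.reverse.support_eq_cons, List.nodup_cons] at this
              exact this.1
            · rw [Walk.edges_reverse, List.mem_reverse]; exact hsmq
            · simp
          rw [hqr, Walk.edges_cons, List.head?_cons, Option.some_inj] at hhead
          obtain rfl : z = v := Sym2.congr_right.1 hhead
          have hWeq : (Walk.cons h q).reverse = Walk.cons h2 (r.concat h.symm) := by
            rw [Walk.reverse_cons, hqr, Walk.cons_append, ← Walk.concat_eq_append]
          have hWcyc : (Walk.cons h2 (r.concat h.symm)).IsCycle := by
            rw [← hWeq]; exact isCycle_reverse hw1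
          refine ⟨h2, r.concat h.symm, hWcyc, fun e he => hab e ?_⟩
          have he' : e ∈ (Walk.cons h q).reverse.edges := by rw [hWeq]; exact he
          rw [Walk.edges_reverse, List.mem_reverse] at he'
          exact (hmem1 e).1 he'
      clear hmem1 hw1 hw1eq hqp hsbq
      obtain ⟨h', q, hcyc, hcols⟩ := key
      obtain ⟨hq, hsuv⟩ := (Walk.cons_isCycle_iff q h').1 hcyc
      have hsubq : ∀ e ∈ q.edges, e ∈ H.edgeSet := fun e he =>
        (hHedge e).2 ⟨q.edges_subset_edgeSet he, fun hh => hsuv (hh ▸ he)⟩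
      have hqne : q.edges ≠ [] := by
        intro h0
        have : ¬ q.Nil := Walk.not_nil_of_ne huv.ne'
        rw [Walk.not_nil_iff_lt_length, ← q.length_edges, h0] at this
        simp at this
      set e₀ := q.edges.head hqne with he₀def
      set e₁ := q.edges.getLast hqne with he₁def
      have he₀mem : e₀ ∈ q.edges := List.head_mem hqne
      have he₁mem : e₁ ∈ q.edges := List.getLast_mem hqne
      have hv0 : v ∈ e₀ := (edges_chain_share q).2 e₀
        (by rw [Option.mem_def, List.head?_eq_head])
      have hu1 : u ∈ e₁ := by
        apply (edges_chain_share q.reverse).2 e₁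
        rw [Option.mem_def, Walk.edges_reverse, List.head?_reverse,
          List.getLast?_eq_getLast_of_ne_nil hqne]
      have hne0 : e₀ ≠ s(u, v) := fun hh => hsuv (hh ▸ he₀mem)
      have hne1 : e₁ ≠ s(u, v) := fun hh => hsuv (hh ▸ he₁mem)
      set i := c e₀ with hidef
      have hij : i ≠ j := by
        have hd := hP.2 e₀ (q.edges_subset_edgeSet he₀mem) s(u, v) hsuvG hne0
          ⟨v, hv0, by simp⟩
        rwa [hc'eq e₀ hne0, hc'suv] at hd
      have hja : j = a ∨ j = b := by
        have := hcols s(u, v) (by rw [Walk.edges_cons]; exact List.mem_cons_self)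
        rwa [hc'suv] at this
      have hia : i = a ∨ i = b := by
        have := hcols e₀ (by rw [Walk.edges_cons]; exact List.mem_cons_of_mem _ he₀mem)
        rwa [hc'eq e₀ hne0] at this
      have habij : ∀ y : ℕ, (y = a ∨ y = b) → y = i ∨ y = j := by
        intro y hy; omega
      have hqcols : ∀ e ∈ q.edges, c e = i ∨ c e = j := by
        intro e he
        have hnee : e ≠ s(u, v) := fun hh => hsuv (hh ▸ he)
        refine habij _ ?_
        have := hcols e (by rw [Walk.edges_cons]; exact List.mem_cons_of_mem _ he)
        rwa [hc'eq e hnee] at this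
      have hi1 : c e₁ = i := by
        have hd := hP.2 e₁ (q.edges_subset_edgeSet he₁mem) s(u, v) hsuvG hne1
          ⟨u, hu1, by simp⟩
        rw [hc'eq e₁ hne1, hc'suv] at hd
        exact (hqcols e₁ he₁mem).resolve_right hd
      -- color chain
      have hchain : List.Chain' (· ≠ ·) (q.edges.map c) := by
        have hch := trail_colors_chain hP q hq.isTrail
        have hmapeq : q.edges.map c' = q.edges.map c :=
          List.map_congr_left (fun e he => hc'eq e (fun hh => hsuv (hh ▸ he)))
        rwa [hmapeq] at hch
      -- build the alternating path
      have hp0 : ((q.transfer H hsubq).reverse : H.Walk u v).IsPath :=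
        (hq.transfer hsubq).reverse
      have hp0edges : (q.transfer H hsubq).reverse.edges = q.edges.reverse := by
        rw [Walk.edges_reverse, Walk.edges_transfer]
      have hp0map : (q.transfer H hsubq).reverse.edges.map c = (q.edges.map c).reverse := by
        rw [hp0edges, List.map_reverse]
      have hrevchain : List.Chain' (· ≠ ·) ((q.edges.map c).reverse) := by
        refine List.isChain_reverse.2 ?_
        exact List.IsChain.imp (fun _ _ hxy => hxy.symm) hchain
      have hmemrev : ∀ y ∈ (q.edges.map c).reverse, y = i ∨ y = j := by
        intro y hy
        rw [List.mem_reverse, List.mem_map] at hy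
        obtain ⟨e, he, rfl⟩ := hy
        exact hqcols e he
      have hheadrev : ((q.edges.map c).reverse).head? = some i := by
        rw [List.head?_reverse, List.getLast?_map,
          List.getLast?_eq_getLast_of_ne_nil hqne]
        exact congrArg some hi1
      have halt : AltColors i j ((q.edges.map c).reverse) := by
        cases hmr : (q.edges.map c).reverse with
        | nil => rw [hmr] at hheadrev; simp at hheadrev
        | cons z t =>
          rw [hmr, List.head?_cons, Option.some_inj] at hheadrev
          subst hheadrev
          rw [hmr] at hrevchain hmemrev
          exact altColors_of_chain t
            (fun y hy => hmemrev y (List.mem_cons_of_mem _ hy)) hrevchain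
      have hlast : (((q.transfer H hsubq).reverse).edges.map c).getLast? = some i := by
        rw [hp0map, List.getLast?_reverse, List.head?_map, List.head?_eq_head hqne]
        rfl
      exact hn ⟨i, ⟨e₁, hsubq e₁ he₁mem, hu1, hi1⟩, ⟨e₀, hsubq e₀ he₀mem, hv0, rfl⟩,
        (q.transfer H hsubq).reverse, hp0, by rwa [hp0map], hlast⟩
    · -- cycle avoiding uv: contradiction with acyclicity of c on H
      have hsub : ∀ e ∈ w.edges, e ∈ H.edgeSet := fun e he =>
        (hHedge e).2 ⟨w.edges_subset_edgeSet he, fun hh => hsm (hh ▸ he)⟩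
      refine hc.2 x (w.transfer H hsub) (hw.transfer hsub) ⟨a, b, fun e he => ?_⟩
      rw [Walk.edges_transfer] at he
      have h1 := hab e he
      rwa [hc'eq e (fun hh => hsm (hh ▸ he))] at h1
end
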